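/- For the CES utility u(x) = (Σ_j a_j x_j^ρ)^{1/ρ} with coefficients a_j > 0 and parameter ρ ∈ (0, 1), the indirect utility at price p ≫ 0 and budget B > 0 equals v(p, B) = B · (Σ_j a_j^{1−ρ̃} p_j^{ρ̃})^{−1/ρ̃}, where ρ̃ = ρ/(ρ−1). -/

import Mathlib

theorem stmt5 {m : ℕ} (a : Fin m → ℝ) (ha : ∀ j, 0 < a j)
    (ρ : ℝ) (hρ : ρ ∈ Set.Ioo (0 : ℝ) 1)
    (p : Fin m → ℝ) (hp : ∀ j, 0 < p j) (B : ℝ) (hB : 0 < B) :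
    IsLUB {t : ℝ | ∃ x : Fin m → ℝ, 0 ≤ x ∧ ∑ j, p j * x j ≤ B ∧
        (∑ j, a j * x j ^ ρ) ^ (1 / ρ) = t}
      (B * (∑ j, a j ^ (1 - ρ / (ρ - 1)) * p j ^ (ρ / (ρ - 1))) ^ (-1 / (ρ / (ρ - 1)))) := by
  obtain ⟨hρ0, hρ1⟩ := hρ
  have hρne : ρ ≠ 0 := ne_of_gt hρ0
  have h1ρ : (0:ℝ) < 1 - ρ := by linarith
  have h1ρne : (1:ℝ) - ρ ≠ 0 := ne_of_gt h1ρ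
  have hρ1ne : ρ - 1 ≠ 0 := by linarith
  set σ : ℝ := 1 / (1 - ρ) with hσdef
  -- rewrite exponents
  have he1 : 1 - ρ / (ρ - 1) = σ := by rw [hσdef]; field_simp; ring
  have he2 : ρ / (ρ - 1) = -(ρ * σ) := by rw [hσdef]; field_simp; ring
  have he3 : -1 / (ρ / (ρ - 1)) = (1 - ρ) / ρ := by
    rw [div_div_eq_mul_div, neg_one_mul, neg_div]
    ring
  rw [he3, he1, he2]
  set S : ℝ := ∑ j, a j ^ σ * p j ^ (-(ρ * σ)) with hSdef
  have hS0 : 0 ≤ S := Finset.sum_nonneg fun j _ =>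
    mul_nonneg (Real.rpow_nonneg (ha j).le _) (Real.rpow_nonneg (hp j).le _)
  -- upper bound part, valid in general
  have hub : ∀ t ∈ {t : ℝ | ∃ x : Fin m → ℝ, 0 ≤ x ∧ ∑ j, p j * x j ≤ B ∧
      (∑ j, a j * x j ^ ρ) ^ (1 / ρ) = t}, t ≤ B * S ^ ((1 - ρ) / ρ) := by
    rintro t ⟨x, hx, hbud, rfl⟩
    have hxj : ∀ j, 0 ≤ x j := fun j => hx j
    have hconj : (1/(1-ρ)).HolderConjugate (1/ρ) := by
      constructor
      · rw [one_div, one_div, inv_inv, inv_inv]; norm_num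
      · positivity
      · positivity
    have hH := Real.inner_le_Lp_mul_Lq_of_nonneg (s := Finset.univ)
      (f := fun j => a j * p j ^ (-ρ)) (g := fun j => (p j * x j) ^ ρ) hconj
      (fun i _ => mul_nonneg (ha i).le (Real.rpow_nonneg (hp i).le _))
      (fun i _ => Real.rpow_nonneg (mul_nonneg (hp i).le (hxj i)) _)
    have key : ∑ j, a j * x j ^ ρ ≤ S ^ (1 - ρ) * B ^ ρ := by
      have e1 : ∀ j, a j * x j ^ ρ = (a j * p j ^ (-ρ)) * (p j * x j) ^ ρ := by
        intro j
        rw [Real.mul_rpow (hp j).le (hxj j)]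
        have h1 : p j ^ (-ρ) * p j ^ ρ = 1 := by
          rw [← Real.rpow_add (hp j)]; norm_num
        calc a j * x j ^ ρ = a j * (p j ^ (-ρ) * p j ^ ρ) * x j ^ ρ := by
              rw [h1]; ring
          _ = a j * p j ^ (-ρ) * (p j ^ ρ * x j ^ ρ) := by ring
      have e2 : ∀ j, (a j * p j ^ (-ρ)) ^ (1/(1-ρ)) = a j ^ σ * p j ^ (-(ρ * σ)) := by
        intro j
        rw [Real.mul_rpow (ha j).le (Real.rpow_nonneg (hp j).le _),
          ← Real.rpow_mul (hp j).le]
        rw [hσdef]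
        ring_nf
      have e3 : ∀ j, ((p j * x j) ^ ρ) ^ (1/ρ) = p j * x j := by
        intro j
        rw [← Real.rpow_mul (mul_nonneg (hp j).le (hxj j)), mul_one_div,
          div_self hρne, Real.rpow_one]
      calc ∑ j, a j * x j ^ ρ
          = ∑ j, (a j * p j ^ (-ρ)) * (p j * x j) ^ ρ :=
            Finset.sum_congr rfl fun j _ => e1 j
        _ ≤ (∑ j, (a j * p j ^ (-ρ)) ^ (1/(1-ρ))) ^ (1/(1/(1-ρ))) *
              (∑ j, ((p j * x j) ^ ρ) ^ (1/ρ)) ^ (1/(1/ρ)) := hH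
        _ = S ^ (1 - ρ) * (∑ j, p j * x j) ^ ρ := by
            rw [one_div_one_div, one_div_one_div]
            congr 1
            · congr 1
              exact Finset.sum_congr rfl fun j _ => e2 j
            · congr 1
              exact Finset.sum_congr rfl fun j _ => e3 j
        _ ≤ S ^ (1 - ρ) * B ^ ρ := by
            have h0 : (0:ℝ) ≤ ∑ j, p j * x j :=
              Finset.sum_nonneg fun j _ => mul_nonneg (hp j).le (hxj j)
            exact mul_le_mul_of_nonneg_left
              (Real.rpow_le_rpow h0 hbud hρ0.le) (Real.rpow_nonneg hS0 _)
    calc (∑ j, a j * x j ^ ρ) ^ (1/ρ)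
        ≤ (S ^ (1 - ρ) * B ^ ρ) ^ (1/ρ) := by
          refine Real.rpow_le_rpow ?_ key (by positivity)
          exact Finset.sum_nonneg fun j _ =>
            mul_nonneg (ha j).le (Real.rpow_nonneg (hxj j) _)
      _ = B * S ^ ((1 - ρ) / ρ) := by
          rw [Real.mul_rpow (Real.rpow_nonneg hS0 _) (Real.rpow_nonneg hB.le _),
            ← Real.rpow_mul hS0, ← Real.rpow_mul hB.le, mul_one_div, mul_one_div,
            div_self hρne, Real.rpow_one, mul_comm]
  rcases Nat.eq_zero_or_pos m with hm | hm
  · -- m = 0 case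
    subst hm
    have hS : S = 0 := by simp [hSdef]
    have hv : B * S ^ ((1 - ρ) / ρ) = 0 := by
      rw [hS, Real.zero_rpow (by positivity), mul_zero]
    constructor
    · intro t ht; rw [← hv] at *; exact hub t ht
    · intro b hb
      rw [hv]
      refine hb ⟨0, le_refl _, ?_, ?_⟩
      · simp; linarith
      · simp
        exact Real.zero_rpow (inv_ne_zero hρne)
  · -- m > 0 : supremum attained
    have : Nonempty (Fin m) := ⟨⟨0, hm⟩⟩
    have hS : 0 < S :=
      Finset.sum_pos (fun j _ => mul_pos (Real.rpow_pos_of_pos (ha j) _)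
        (Real.rpow_pos_of_pos (hp j) _)) Finset.univ_nonempty
    constructor
    · exact hub
    · intro b hb
      refine hb ⟨fun j => (B / S) * (a j ^ σ * p j ^ (-σ)), ?_, ?_, ?_⟩
      · intro j
        exact mul_nonneg (div_nonneg hB.le hS0)
          (mul_nonneg (Real.rpow_nonneg (ha j).le _) (Real.rpow_nonneg (hp j).le _))
      · have hpt : ∀ j, p j * ((B / S) * (a j ^ σ * p j ^ (-σ)))
            = (B / S) * (a j ^ σ * p j ^ (-(ρ * σ))) := by
          intro j
          have h1 : p j * p j ^ (-σ) = p j ^ (-(ρ * σ)) := by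
            nth_rewrite 1 [← Real.rpow_one (p j)]
            rw [← Real.rpow_add (hp j)]
            congr 1
            rw [hσdef]; field_simp; ring
          calc p j * ((B / S) * (a j ^ σ * p j ^ (-σ)))
              = (B / S) * (a j ^ σ * (p j * p j ^ (-σ))) := by ring
            _ = (B / S) * (a j ^ σ * p j ^ (-(ρ * σ))) := by rw [h1]
        rw [Finset.sum_congr rfl fun j _ => hpt j, ← Finset.mul_sum, ← hSdef,
          div_mul_cancel₀ _ (ne_of_gt hS)]
      · have hterm : ∀ j, a j * ((B / S) * (a j ^ σ * p j ^ (-σ))) ^ ρ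
            = (B / S) ^ ρ * (a j ^ σ * p j ^ (-(ρ * σ))) := by
          intro j
          rw [Real.mul_rpow (div_nonneg hB.le hS0)
              (mul_nonneg (Real.rpow_nonneg (ha j).le _) (Real.rpow_nonneg (hp j).le _)),
            Real.mul_rpow (Real.rpow_nonneg (ha j).le _) (Real.rpow_nonneg (hp j).le _),
            ← Real.rpow_mul (ha j).le, ← Real.rpow_mul (hp j).le]
          have ha' : a j * a j ^ (σ * ρ) = a j ^ σ := by
            nth_rewrite 1 [← Real.rpow_one (a j)]
            rw [← Real.rpow_add (ha j)]
            congr 1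
            rw [hσdef]; field_simp; ring
          have hp' : (-σ) * ρ = -(ρ * σ) := by ring
          rw [hp']
          calc a j * ((B / S) ^ ρ * (a j ^ (σ * ρ) * p j ^ (-(ρ * σ))))
              = (B / S) ^ ρ * ((a j * a j ^ (σ * ρ)) * p j ^ (-(ρ * σ))) := by ring
            _ = (B / S) ^ ρ * (a j ^ σ * p j ^ (-(ρ * σ))) := by rw [ha']
        rw [Finset.sum_congr rfl fun j _ => hterm j, ← Finset.mul_sum, ← hSdef]
        have hBS : (B / S) ^ ρ * S = S ^ (1 - ρ) * B ^ ρ := by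
          have h1 : S ^ ρ * S ^ (1 - ρ) = S := by
            rw [← Real.rpow_add hS]; norm_num
          have hSρne : S ^ ρ ≠ 0 := ne_of_gt (Real.rpow_pos_of_pos hS ρ)
          calc (B / S) ^ ρ * S
              = B ^ ρ / S ^ ρ * (S ^ ρ * S ^ (1 - ρ)) := by
                rw [h1, Real.div_rpow hB.le hS0]
            _ = S ^ (1 - ρ) * B ^ ρ := by field_simp
        rw [hBS, Real.mul_rpow (Real.rpow_nonneg hS0 _) (Real.rpow_nonneg hB.le _),
          ← Real.rpow_mul hS0, ← Real.rpow_mul hB.le, mul_one_div, mul_one_div,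
          div_self hρne, Real.rpow_one, mul_comm]
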